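/- Let a ≥ 1 and b ≥ 2 be integers, and let x ∈ Λ^{a+b} be a point whose coordinates x_1,…,x_{a+b} are linearly independent over the rationals. If T_{a,b}^k(x) does not converge to (0,…,0) as k → ∞, then there exists an integer k ≥ 1 such that T_{a,b}^k(x) ∈ A. -/

import Mathlib

open MeasureTheory Filter Topology

/-- `Λⁿ`: points of `ℝⁿ` with nonnegative, nondecreasing coordinates. -/
def Lambda (n : ℕ) : Set (Fin n → ℝ) := {x | (∀ i, 0 ≤ x i) ∧ Monotone x}

/-- The vector `(x₁,…,x_a, x_{a+1}-x_a,…,x_{a+b}-x_a)` (0-based indexing). -/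
noncomputable def subVec (a b : ℕ) (x : Fin (a + b) → ℝ) : Fin (a + b) → ℝ :=
  fun j => if (j : ℕ) < a then x j else x j - x ⟨a - 1, by have := j.isLt; omega⟩

/-- The map `T_{a,b}`: nondecreasing rearrangement of `subVec a b x`. -/
noncomputable def Tab (a b : ℕ) (x : Fin (a + b) → ℝ) : Fin (a + b) → ℝ :=
  subVec a b x ∘ Tuple.sort (subVec a b x)
variable {a b : ℕ}

lemma subVec_lt {y : Fin (a+b) → ℝ} {j : Fin (a+b)} (h : (j:ℕ) < a) :
    subVec a b y j = y j := if_pos h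

lemma subVec_ge {y : Fin (a+b) → ℝ} {j : Fin (a+b)} (h : ¬ (j:ℕ) < a) :
    subVec a b y j = y j - y ⟨a - 1, by have := j.isLt; omega⟩ := if_neg h

lemma tab_mem_Lambda {y : Fin (a+b) → ℝ} (hy : y ∈ Lambda (a+b)) :
    Tab a b y ∈ Lambda (a+b) := by
  constructor
  · intro i
    show 0 ≤ subVec a b y (Tuple.sort (subVec a b y) i)
    set j := Tuple.sort (subVec a b y) i
    by_cases h : (j:ℕ) < a
    · rw [subVec_lt h]; exact hy.1 j
    · rw [subVec_ge h]
      have : y ⟨a - 1, by have := j.isLt; omega⟩ ≤ y j := by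
        apply hy.2; rw [Fin.le_def]; simp; omega
      linarith
  · exact Tuple.monotone_sort _

lemma tab_sum (ha : 1 ≤ a) (y : Fin (a+b) → ℝ) :
    ∑ i, Tab a b y i = ∑ i, y i - b * y ⟨a - 1, by omega⟩ := by
  have h1 : ∑ i, Tab a b y i = ∑ i, subVec a b y i := Equiv.sum_comp _ _
  rw [h1, Fin.sum_univ_add (f := subVec a b y), Fin.sum_univ_add (f := y)]
  have h2 : ∀ i : Fin a, subVec a b y (Fin.castAdd b i) = y (Fin.castAdd b i) := by
    intro i; exact subVec_lt (by simpa using i.isLt)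
  have h3 : ∀ i : Fin b, subVec a b y (Fin.natAdd a i) =
      y (Fin.natAdd a i) - y ⟨a - 1, by omega⟩ := by
    intro i; exact subVec_ge (by simp [Fin.natAdd])
  rw [Finset.sum_congr rfl (fun i _ => h2 i), Finset.sum_congr rfl (fun i _ => h3 i),
    Finset.sum_sub_distrib, Finset.sum_const]
  simp [Finset.card_univ]
  ring

lemma lambda_le_last {y : Fin (a+b) → ℝ} (hy : y ∈ Lambda (a+b)) (hab : 1 ≤ a + b)
    (i : Fin (a+b)) : y i ≤ y ⟨a + b - 1, by omega⟩ := by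
  apply hy.2; rw [Fin.le_def]; have := i.isLt; simp; omega

lemma tab_last_le (hab : 1 ≤ a + b) {y : Fin (a+b) → ℝ} (hy : y ∈ Lambda (a+b)) :
    Tab a b y ⟨a + b - 1, by omega⟩ ≤ y ⟨a + b - 1, by omega⟩ := by
  show subVec a b y (Tuple.sort (subVec a b y) ⟨a + b - 1, by omega⟩) ≤ _
  set j := Tuple.sort (subVec a b y) ⟨a + b - 1, by omega⟩
  have hj : y j ≤ y ⟨a + b - 1, by omega⟩ := lambda_le_last hy hab j
  by_cases h : (j:ℕ) < a
  · rw [subVec_lt h]; exact hj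
  · rw [subVec_ge h]
    have := hy.1 ⟨a - 1, by omega⟩
    linarith

lemma subVec_linearIndependent (ha : 1 ≤ a) {y : Fin (a+b) → ℝ}
    (hy : LinearIndependent ℚ y) : LinearIndependent ℚ (subVec a b y) := by
  rw [Fintype.linearIndependent_iff] at hy ⊢
  intro g hg
  set piv : Fin (a+b) := ⟨a - 1, by omega⟩ with hpiv
  set S : ℚ := ∑ i ∈ Finset.univ.filter (fun i : Fin (a+b) => ¬ ((i:ℕ) < a)), g i with hS
  set g' : Fin (a+b) → ℚ := fun i => g i - (if i = piv then S else 0) with hg'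
  have key : ∑ i, g' i • y i = 0 := by
    have e1 : ∑ i, g' i • y i = ∑ i, g i • y i - S • y piv := by
      rw [hg']
      simp only [sub_smul, ite_smul, zero_smul, Finset.sum_sub_distrib]
      rw [Finset.sum_ite_eq' Finset.univ piv (fun x => S • y x)]
      simp
    have e2 : ∑ i, g i • subVec a b y i = ∑ i, g i • y i - S • y piv := by
      have : ∀ i : Fin (a+b), g i • subVec a b y i
          = g i • y i - (if (i:ℕ) < a then 0 else g i • y piv) := by
        intro i
        by_cases h : (i:ℕ) < a
        · rw [subVec_lt h, if_pos h]; ring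
        · rw [subVec_ge h, if_neg h, smul_sub]
      rw [Finset.sum_congr rfl (fun i _ => this i), Finset.sum_sub_distrib]
      congr 1
      rw [Finset.sum_ite, Finset.sum_const_zero, zero_add, hS, Finset.sum_smul]
    rw [e1, ← e2, hg]
  have hz := hy g' key
  have hne : ∀ i, i ≠ piv → g i = 0 := by
    intro i hi
    have := hz i
    rw [hg'] at this; simp [hi] at this; exact this
  intro i
  by_cases hi : i = piv
  · have hS0 : S = 0 := by
      rw [hS]
      apply Finset.sum_eq_zero
      intro j hj
      simp at hj
      apply hne
      intro hj'
      rw [hj'] at hj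
      simp [hpiv] at hj; omega
    have := hz piv
    rw [hg'] at this; simp [hS0] at this
    rw [hi]; exact this
  · exact hne i hi

lemma tab_linearIndependent (ha : 1 ≤ a) {y : Fin (a+b) → ℝ}
    (hy : LinearIndependent ℚ y) : LinearIndependent ℚ (Tab a b y) :=
  (subVec_linearIndependent ha hy).comp _ (Tuple.sort (subVec a b y)).injective

lemma tab_eq_subVec (ha : 1 ≤ a) (hb : 1 ≤ b) {y : Fin (a+b) → ℝ}
    (hy : y ∈ Lambda (a+b))
    (hkey : 2 * y ⟨a - 1, by omega⟩ < y ⟨a, by omega⟩) :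
    Tab a b y = subVec a b y := by
  have hmono : Monotone (subVec a b y) := by
    intro i j hij
    rw [Fin.le_def] at hij
    by_cases hi : (i:ℕ) < a <;> by_cases hj : (j:ℕ) < a
    · rw [subVec_lt hi, subVec_lt hj]; exact hy.2 (Fin.le_def.mpr hij)
    · rw [subVec_lt hi, subVec_ge hj]
      have h1 : y i ≤ y ⟨a - 1, by omega⟩ := by
        apply hy.2; rw [Fin.le_def]; simp; omega
      have h2 : y ⟨a, by omega⟩ ≤ y j := by
        apply hy.2; rw [Fin.le_def]; simp; omega
      linarith
    · omega
    · rw [subVec_ge hi, subVec_ge hj]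
      have := hy.2 (Fin.le_def.mpr hij)
      linarith
  unfold Tab
  rw [Tuple.sort_eq_refl_iff_monotone.mpr hmono]
  rfl


set_option maxHeartbeats 1000000 in
/-- if the coordinates of `x ∈ Λ^{a+b}` are rationally
independent and the orbit does not converge to the origin, then some iterate
`T_{a,b}^k(x)`, `k ≥ 1`, lies in `A = {x ∈ Λ^{a+b} : σ(x) ≤ b·x_{a+b}}`. -/
theorem statement13 (a b : ℕ) (ha : 1 ≤ a) (hb : 2 ≤ b)
    (x : Fin (a + b) → ℝ) (hx : x ∈ Lambda (a + b))
    (hind : LinearIndependent ℚ x)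
    (hnot : ¬ Tendsto (fun k => (Tab a b)^[k] x) atTop (𝓝 0)) :
    ∃ k : ℕ, 1 ≤ k ∧ (Tab a b)^[k] x ∈ Lambda (a + b) ∧
      ∑ i, (Tab a b)^[k] x i ≤ (b : ℝ) * (Tab a b)^[k] x ⟨a + b - 1, by omega⟩ := by
  by_contra hcon
  push_neg at hcon
  set y : ℕ → Fin (a+b) → ℝ := fun k => (Tab a b)^[k] x with hydef
  have hystep : ∀ k, y (k+1) = Tab a b (y k) := fun k => Function.iterate_succ_apply' _ _ _
  have hL : ∀ k, y k ∈ Lambda (a+b) := by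
    intro k; induction k with
    | zero => exact hx
    | succ k ih => rw [hystep]; exact tab_mem_Lambda ih
  have hI : ∀ k, LinearIndependent ℚ (y k) := by
    intro k; induction k with
    | zero => exact hind
    | succ k ih => rw [hystep]; exact tab_linearIndependent ha ih
  set piv : Fin (a+b) := ⟨a - 1, by omega⟩ with hpivdef
  set lst : Fin (a+b) := ⟨a + b - 1, by omega⟩ with hlstdef
  set aIdx : Fin (a+b) := ⟨a, by omega⟩ with haIdxdef
  set s : ℕ → ℝ := fun k => ∑ i, y k i with hsdef
  set c : ℕ → ℝ := fun k => y k piv with hcdef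
  set m : ℕ → ℝ := fun k => y k lst with hmdef
  have hsum : ∀ k, s (k+1) = s k - b * c k := by
    intro k
    show ∑ i, y (k+1) i = _
    rw [hystep, tab_sum ha]
  have hc0 : ∀ k, 0 ≤ c k := fun k => (hL k).1 piv
  have hm0 : ∀ k, 0 ≤ m k := fun k => (hL k).1 lst
  have hs_anti : Antitone s := by
    apply antitone_nat_of_succ_le
    intro k
    rw [hsum]
    have : 0 ≤ (b:ℝ) * c k := mul_nonneg (Nat.cast_nonneg b) (hc0 k)
    linarith
  have hs0 : ∀ k, 0 ≤ s k := fun k => Finset.sum_nonneg fun i _ => (hL k).1 i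
  have hsL : Tendsto s atTop (𝓝 (⨅ k, s k)) :=
    tendsto_atTop_ciInf hs_anti ⟨0, by rintro _ ⟨k, rfl⟩; exact hs0 k⟩
  have hcz : Tendsto c atTop (𝓝 0) := by
    have h1 : Tendsto (fun k => s k - s (k+1)) atTop (𝓝 ((⨅ k, s k) - ⨅ k, s k)) :=
      hsL.sub (hsL.comp (tendsto_add_atTop_nat 1))
    have h2 : (fun k => s k - s (k+1)) = fun k => (b:ℝ) * c k := by
      funext k; rw [hsum]; ring
    rw [h2, sub_self] at h1
    have hb0 : (b:ℝ) ≠ 0 := by positivity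
    have h3 := h1.const_mul ((b:ℝ)⁻¹)
    rw [mul_zero] at h3
    convert h3 using 2 with k
    field_simp
  have hm_anti : Antitone m := by
    apply antitone_nat_of_succ_le
    intro k
    show y (k+1) lst ≤ y k lst
    rw [hystep]
    exact tab_last_le (by omega) (hL k)
  obtain ⟨M, hmM, hM0, hMle⟩ : ∃ M, Tendsto m atTop (𝓝 M) ∧ 0 ≤ M ∧ ∀ k, M ≤ m k := by
    have h := tendsto_atTop_ciInf hm_anti ⟨0, by rintro _ ⟨k, rfl⟩; exact hm0 k⟩
    exact ⟨_, h, le_ciInf hm0, hm_anti.le_of_tendsto h⟩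
  have hMpos : 0 < M := by
    rcases hM0.lt_or_eq with h | h
    · exact h
    · exfalso
      apply hnot
      rw [tendsto_pi_nhds]
      intro i
      have hmz : Tendsto m atTop (𝓝 0) := by rwa [h]
      simpa using squeeze_zero (fun k => (hL k).1 i)
        (fun k => lambda_le_last (hL k) (by omega) i) hmz
  have H : ∀ k, 1 ≤ k → (b:ℝ) * m k < s k := by
    intro k hk
    have := hcon k hk (hL k)
    exact this
  -- key coordinate bound
  have hkey : ∀ k, 1 ≤ k → m k - a * c k < y k aIdx := by
    intro k hk
    have hsplit : s k = ∑ i : Fin a, y k (Fin.castAdd b i) + ∑ i : Fin b, y k (Fin.natAdd a i) :=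
      Fin.sum_univ_add _
    have h1 : ∑ i : Fin a, y k (Fin.castAdd b i) ≤ (a:ℝ) * c k := by
      have := Finset.sum_le_card_nsmul Finset.univ (fun i : Fin a => y k (Fin.castAdd b i)) (c k)
        (fun i _ => by
          apply (hL k).2
          rw [Fin.le_def]
          have := i.isLt
          simp [hpivdef]
          omega)
      simpa [Finset.card_univ, nsmul_eq_mul] using this
    have h2 : ∑ i : Fin b, y k (Fin.natAdd a i) ≤ y k aIdx + ((b:ℝ) - 1) * m k := by
      have hbpos : 0 < b := by omega
      have h0mem : (⟨0, hbpos⟩ : Fin b) ∈ Finset.univ := Finset.mem_univ _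
      rw [← Finset.add_sum_erase Finset.univ _ h0mem]
      have hv : y k (Fin.natAdd a ⟨0, hbpos⟩) = y k aIdx := by
        congr 1
      have herase : ∑ i ∈ Finset.univ.erase (⟨0, hbpos⟩ : Fin b), y k (Fin.natAdd a i)
          ≤ ((b:ℝ) - 1) * m k := by
        have := Finset.sum_le_card_nsmul (Finset.univ.erase (⟨0, hbpos⟩ : Fin b))
          (fun i : Fin b => y k (Fin.natAdd a i)) (m k)
          (fun i _ => lambda_le_last (hL k) (by omega) _)
        rw [Finset.card_erase_of_mem h0mem, Finset.card_univ, Fintype.card_fin,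
          nsmul_eq_mul] at this
        have hcast : ((b - 1 : ℕ) : ℝ) = (b:ℝ) - 1 := by
          rw [Nat.cast_sub (by omega)]; simp
        rw [hcast] at this
        exact this
      linarith [hv]
    have := H k hk
    rw [hsplit] at this
    linarith
  -- eventual regime
  obtain ⟨ε, hεpos, hεeq⟩ : ∃ ε : ℝ, 0 < ε ∧ (a:ℝ) * ε + 2 * ε = M :=
    ⟨M / (a + 2), by positivity, by field_simp⟩
  obtain ⟨K₁, hK₁⟩ := (hcz.eventually (gt_mem_nhds hεpos)).exists_forall_of_atTop
  -- in the eventual regime the pivot entry is constant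
  have hstep : ∀ k, max K₁ 1 ≤ k → c (k+1) = c k := by
    intro k hk
    have hck : c k < ε := hK₁ k (le_trans (le_max_left _ _) hk)
    have hkk : 1 ≤ k := le_trans (le_max_right _ _) hk
    have h2c : 2 * c k < y k aIdx := by
      have hkey' := hkey k hkk
      have hac : (a:ℝ) * c k ≤ a * ε := by
        apply mul_le_mul_of_nonneg_left hck.le (Nat.cast_nonneg a)
      have := hMle k
      linarith
    have heq : Tab a b (y k) = subVec a b (y k) := tab_eq_subVec ha (by omega) (hL k) h2c
    show y (k+1) piv = y k piv
    rw [hystep, heq, subVec_lt (by simp [hpivdef]; omega)]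
  have hconst : ∀ k, max K₁ 1 ≤ k → c k = c (max K₁ 1) := by
    intro k hk
    induction k, hk using Nat.le_induction with
    | base => rfl
    | succ k hk ih => rw [hstep k hk, ih]
  have hcKpos : 0 < c (max K₁ 1) := by
    rcases (hc0 (max K₁ 1)).lt_or_eq with h | h
    · exact h
    · exfalso
      exact (hI (max K₁ 1)).ne_zero piv h.symm
  obtain ⟨K₂, hK₂⟩ := (hcz.eventually (gt_mem_nhds hcKpos)).exists_forall_of_atTop
  have h1 := hK₂ (max (max K₁ 1) K₂) (le_max_right _ _)
  have h2 := hconst (max (max K₁ 1) K₂) (le_max_left _ _)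
  rw [h2] at h1
  exact lt_irrefl _ h1
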